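/- Let A ⊆ ℝ be such that ℝ \ A is countable and dense in ℝ with the Euclidean topology. Then a subset Y of the space H(A) is σ-compact (as a subspace of H(A)) if and only if Y with the subspace topology from H(A) is homeomorphic to some F_σ-subset of the standard middle-thirds Cantor set C with the Euclidean topology. -/

import Mathlib

open Set TopologicalSpace Topology

def hattori (A : Set ℝ) : TopologicalSpace ℝ :=
  TopologicalSpace.generateFrom
    ({s : Set ℝ | IsOpen s} ∪ {s : Set ℝ | ∃ x ∉ A, ∃ ε > 0, s = Set.Ico x (x + ε)})

lemma isOpenH_of_isOpen {A : Set ℝ} {U : Set ℝ} (h : IsOpen U) : IsOpen[hattori A] U :=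
  isOpen_generateFrom_of_mem (Or.inl h)

lemma isOpenH_Ico {A : Set ℝ} {q : ℝ} (r : ℝ) (hq : q ∉ A) : IsOpen[hattori A] (Ico q r) := by
  rcases le_or_gt r q with h | h
  · rw [Ico_eq_empty (by exact fun hlt => absurd h (not_le.mpr hlt))]
    exact @isOpen_empty _ (hattori A)
  · have : Ico q r = Ico q (q + (r - q)) := by ring_nf
    rw [this]
    exact isOpen_generateFrom_of_mem (Or.inr ⟨q, hq, r - q, by linarith, rfl⟩)

lemma isOpenH_Ici {A : Set ℝ} {q : ℝ} (hq : q ∉ A) : IsOpen[hattori A] (Ici q) := by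
  have : Ici q = ⋃ n : ℕ, Ico q (q + (n + 1)) := by
    ext x
    simp only [mem_Ici, mem_iUnion, mem_Ico]
    constructor
    · intro hx
      obtain ⟨n, hn⟩ := exists_nat_gt (x - q)
      exact ⟨n, hx, by linarith⟩
    · rintro ⟨n, h1, _⟩; exact h1
  rw [this]
  exact @isOpen_iUnion _ _ (hattori A) _ fun n => isOpenH_Ico _ hq

lemma isClosedH_Ico {A : Set ℝ} {q r : ℝ} (hr : r ∉ A) : IsClosed[hattori A] (Ico q r) := by
  rw [← @isOpen_compl_iff _ _ (hattori A)]
  have hc : (Ico q r)ᶜ = Iio q ∪ Ici r := by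
    ext y
    simp only [mem_compl_iff, mem_Ico, not_and, not_lt, mem_union, mem_Iio, mem_Ici]
    exact ⟨fun h => (lt_or_ge y q).imp id h, fun h hq => h.resolve_left (not_lt.mpr hq)⟩
  rw [hc]
  exact @IsOpen.union _ _ _ (hattori A) (isOpenH_of_isOpen isOpen_Iio) (isOpenH_Ici hr)

/-- basis property -/
lemma hattori_basis {A : Set ℝ} (hdense : Dense Aᶜ) {U : Set ℝ} (hU : IsOpen[hattori A] U)
    {x : ℝ} (hx : x ∈ U) : ∃ q r : ℝ, q ∉ A ∧ r ∉ A ∧ x ∈ Ico q r ∧ Ico q r ⊆ U := by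
  have key : ∀ (x : ℝ) (δ : ℝ), 0 < δ →
      ∃ q r : ℝ, q ∉ A ∧ r ∉ A ∧ x ∈ Ico q r ∧ Ico q r ⊆ Ioo (x - δ) (x + δ) := by
    intro x δ hδ
    obtain ⟨r, hrA, hr⟩ := hdense.exists_between (show x < x + δ by linarith)
    by_cases hxA : x ∈ A
    · obtain ⟨q, hqA, hq⟩ := hdense.exists_between (show x - δ < x by linarith)
      exact ⟨q, r, hqA, hrA, ⟨le_of_lt hq.2, hr.1⟩,
        fun y hy => ⟨lt_of_lt_of_le hq.1 hy.1, lt_trans hy.2 hr.2⟩⟩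
    · exact ⟨x, r, hxA, hrA, ⟨le_refl x, hr.1⟩,
        fun y hy => ⟨lt_of_lt_of_le (by linarith) hy.1, lt_trans hy.2 hr.2⟩⟩
  have hU' : TopologicalSpace.GenerateOpen
      ({s : Set ℝ | IsOpen s} ∪ {s : Set ℝ | ∃ x ∉ A, ∃ ε > 0, s = Set.Ico x (x + ε)}) U := hU
  clear hU
  induction hU' with
  | basic s hs =>
    rcases hs with hs | ⟨a, haA, ε, hε, rfl⟩
    · obtain ⟨δ, hδ, hball⟩ := Metric.isOpen_iff.mp (by exact hs) x hx
      rw [Real.ball_eq_Ioo] at hball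
      obtain ⟨q, r, h1, h2, h3, h4⟩ := key x δ hδ
      exact ⟨q, r, h1, h2, h3, h4.trans hball⟩
    · obtain ⟨r, hrA, hr⟩ := hdense.exists_between (show x < a + ε from hx.2)
      exact ⟨a, r, haA, hrA, ⟨hx.1, hr.1⟩, fun y hy => ⟨hy.1, lt_trans hy.2 hr.2⟩⟩
  | univ =>
    obtain ⟨q, r, h1, h2, h3, _⟩ := key x 1 one_pos
    exact ⟨q, r, h1, h2, h3, subset_univ _⟩
  | inter s t _ _ ihs iht =>
    obtain ⟨q, r, h1, h2, h3, h4⟩ := ihs hx.1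
    obtain ⟨q', r', h1', h2', h3', h4'⟩ := iht hx.2
    refine ⟨max q q', min r r', ?_, ?_, ?_, ?_⟩
    · rcases max_choice q q' with h | h <;> rw [h] <;> assumption
    · rcases min_choice r r' with h | h <;> rw [h] <;> assumption
    · exact ⟨max_le h3.1 h3'.1, lt_min h3.2 h3'.2⟩
    · intro y hy
      exact ⟨h4 ⟨le_trans (le_max_left _ _) hy.1, lt_of_lt_of_le hy.2 (min_le_left _ _)⟩,
        h4' ⟨le_trans (le_max_right _ _) hy.1, lt_of_lt_of_le hy.2 (min_le_right _ _)⟩⟩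
  | sUnion S _ ih =>
    obtain ⟨s, hsS, hxs⟩ := hx
    obtain ⟨q, r, h1, h2, h3, h4⟩ := ih s hsS hxs
    exact ⟨q, r, h1, h2, h3, fun y hy => ⟨s, hsS, h4 hy⟩⟩

noncomputable def cbit (b : Bool) : ℝ := if b then 2 else 0

lemma cbit_nonneg (b : Bool) : 0 ≤ cbit b := by cases b <;> simp [cbit]
lemma cbit_le_two (b : Bool) : cbit b ≤ 2 := by cases b <;> simp [cbit]

noncomputable def gmap (f : ℕ → Bool) : ℝ := ∑' n, cbit (f n) / 3 ^ (n + 1)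

lemma two_div_le (n : ℕ) : (2:ℝ) / 3 ^ (n+1) ≤ (1/3) ^ n := by
  rw [div_pow, one_pow, pow_succ]
  rw [div_le_div_iff₀ (by positivity) (by positivity)]
  nlinarith [pow_pos (show (0:ℝ) < 3 by norm_num) n]

lemma gmap_summable (f : ℕ → Bool) : Summable (fun n => cbit (f n) / 3 ^ (n + 1)) := by
  apply Summable.of_nonneg_of_le (fun n => div_nonneg (cbit_nonneg _) (by positivity)) (fun n => ?_)
    (summable_geometric_of_lt_one (show (0:ℝ) ≤ 1/3 by norm_num) (by norm_num))
  calc cbit (f n) / 3 ^ (n+1) ≤ 2 / 3 ^ (n+1) := by gcongr; exact cbit_le_two _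
    _ ≤ (1/3) ^ n := two_div_le n

lemma tsum_two_div_pow (m : ℕ) : ∑' k : ℕ, (2:ℝ) / 3 ^ (k + m + 1) = 1 / 3 ^ m := by
  have h1 : ∀ k : ℕ, (2:ℝ) / 3 ^ (k + m + 1) = (2 / 3 ^ (m+1)) * (1/3) ^ k := by
    intro k
    have : k + m + 1 = (m + 1) + k := by ring
    rw [this, pow_add]
    field_simp
    rw [one_div, inv_pow, mul_inv_cancel₀ (by positivity)]
  rw [tsum_congr h1, tsum_mul_left, tsum_geometric_of_lt_one (by norm_num) (by norm_num)]
  rw [pow_succ]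
  field_simp
  ring

lemma gmap_nonneg (f : ℕ → Bool) : 0 ≤ gmap f :=
  tsum_nonneg (fun n => div_nonneg (cbit_nonneg _) (by positivity))

lemma summable_two_div (m : ℕ) : Summable (fun k : ℕ => (2:ℝ) / 3 ^ (k + m + 1)) := by
  apply Summable.of_nonneg_of_le (fun n => by positivity) (fun n => ?_)
    (summable_geometric_of_lt_one (show (0:ℝ) ≤ 1/3 by norm_num) (by norm_num))
  calc (2:ℝ) / 3 ^ (n + m + 1) ≤ 2 / 3 ^ (n + 1) := by
        gcongr
        · norm_num
        · omega
    _ ≤ (1/3) ^ n := two_div_le n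

lemma gmap_le_one (f : ℕ → Bool) : gmap f ≤ 1 := by
  have h := Summable.tsum_le_tsum (f := fun n => cbit (f n) / 3 ^ (n+1))
    (g := fun n : ℕ => (2:ℝ) / 3 ^ (n + 0 + 1))
    (fun n => by simp only [add_zero]; gcongr; exact cbit_le_two (f n)) (gmap_summable f)
    (summable_two_div 0)
  rw [gmap]
  calc ∑' n, cbit (f n) / 3 ^ (n+1) ≤ ∑' n : ℕ, (2:ℝ) / 3 ^ (n + 0 + 1) := h
    _ = 1 / 3 ^ 0 := tsum_two_div_pow 0
    _ = 1 := by norm_num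

lemma gmap_shift (f : ℕ → Bool) : gmap f = cbit (f 0) / 3 + gmap (fun n => f (n+1)) / 3 := by
  rw [gmap, Summable.tsum_eq_zero_add (f := fun n => cbit (f n) / 3 ^ (n+1)) (gmap_summable f)]
  congr 1
  · norm_num
  · rw [gmap, ← tsum_div_const]
    apply tsum_congr
    intro n
    rw [pow_succ]
    ring

lemma gmap_mem_preCantorSet (n : ℕ) (f : ℕ → Bool) : gmap f ∈ preCantorSet n := by
  induction n generalizing f with
  | zero => exact ⟨gmap_nonneg f, gmap_le_one f⟩
  | succ n ih =>
    cases hb : f 0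
    · exact Or.inl ⟨gmap (fun k => f (k+1)), ih _, by rw [gmap_shift f, hb]; simp [cbit]; try ring⟩
    · exact Or.inr ⟨gmap (fun k => f (k+1)), ih _, by rw [gmap_shift f, hb]; simp [cbit]; try ring⟩

lemma gmap_mem_cantorSet (f : ℕ → Bool) : gmap f ∈ cantorSet :=
  Set.mem_iInter.mpr (fun n => gmap_mem_preCantorSet n f)

lemma gmap_continuous : Continuous gmap := by
  apply continuous_tsum (fun n => ((continuous_of_discreteTopology (f := cbit)).comp
    (continuous_apply n)).div_const _)
    (summable_geometric_of_lt_one (show (0:ℝ) ≤ 1/3 by norm_num) (by norm_num))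
  intro n p
  simp only [Function.comp_apply, Real.norm_eq_abs]
  rw [abs_of_nonneg (div_nonneg (cbit_nonneg _) (by positivity))]
  calc cbit (p n) / 3 ^ (n+1) ≤ 2 / 3 ^ (n+1) := by gcongr; exact cbit_le_two _
    _ ≤ (1/3) ^ n := two_div_le n

set_option maxHeartbeats 1000000 in
lemma gmap_lt {f g : ℕ → Bool} {n : ℕ} (hagree : ∀ k < n, f k = g k)
    (hf : f n = true) (hg : g n = false) : gmap g < gmap f := by
  have hsf := gmap_summable f
  have hsg := gmap_summable g
  have hPf := Summable.sum_add_tsum_nat_add (f := fun k => cbit (f k) / 3 ^ (k+1)) n hsf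
  have hPg := Summable.sum_add_tsum_nat_add (f := fun k => cbit (g k) / 3 ^ (k+1)) n hsg
  have hpre : ∑ k ∈ Finset.range n, cbit (f k) / 3 ^ (k+1)
      = ∑ k ∈ Finset.range n, cbit (g k) / 3 ^ (k+1) :=
    Finset.sum_congr rfl (fun k hk => by rw [hagree k (Finset.mem_range.mp hk)])
  -- tail of f is large
  have hsf' : Summable (fun k => cbit (f (k + n)) / 3 ^ (k + n + 1)) :=
    (summable_nat_add_iff n).mpr hsf
  have hsg' : Summable (fun k => cbit (g (k + n)) / 3 ^ (k + n + 1)) :=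
    (summable_nat_add_iff n).mpr hsg
  have hTf : (2:ℝ) / 3 ^ (n+1) ≤ ∑' k, cbit (f (k + n)) / 3 ^ (k + n + 1) := by
    have := Summable.le_tsum hsf' 0 (fun k _ => div_nonneg (cbit_nonneg _) (by positivity))
    simpa [hf, cbit] using this
  have hTg : ∑' k, cbit (g (k + n)) / 3 ^ (k + n + 1) ≤ 1 / 3 ^ (n+1) := by
    rw [Summable.tsum_eq_zero_add hsg']
    have h0 : cbit (g (0 + n)) / 3 ^ (0 + n + 1) = 0 := by
      simp [hg, cbit]
    rw [h0, zero_add]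
    have : ∀ k : ℕ, cbit (g (k + 1 + n)) / 3 ^ (k + 1 + n + 1) ≤ (2:ℝ) / 3 ^ (k + (n+1) + 1) := by
      intro k
      have he : k + 1 + n + 1 = k + (n + 1) + 1 := by omega
      rw [he]
      gcongr
      exact cbit_le_two _
    calc ∑' k, cbit (g (k + 1 + n)) / 3 ^ (k + 1 + n + 1)
        ≤ ∑' k : ℕ, (2:ℝ) / 3 ^ (k + (n+1) + 1) := by
          apply Summable.tsum_le_tsum this _ (summable_two_div (n+1))
          exact (summable_nat_add_iff 1).mpr hsg'
      _ = 1 / 3 ^ (n+1) := tsum_two_div_pow (n+1)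
  have hlt : ∑' k, cbit (g (k + n)) / 3 ^ (k + n + 1)
      < ∑' k, cbit (f (k + n)) / 3 ^ (k + n + 1) := by
    have h13 : (1:ℝ) / 3 ^ (n+1) < 2 / 3 ^ (n+1) := by
      have h3 : (0:ℝ) < 3 ^ (n+1) := by positivity
      rw [div_lt_div_iff₀ h3 h3]
      nlinarith
    linarith
  have : gmap g = ∑ k ∈ Finset.range n, cbit (g k) / 3 ^ (k+1)
      + ∑' k, cbit (g (k + n)) / 3 ^ (k + n + 1) := hPg.symm
  rw [gmap, gmap, ← hPf, ← hPg, hpre]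
  linarith

lemma gmap_injective : Function.Injective gmap := by
  intro f g h
  by_contra hne
  have hex : ∃ n, f n ≠ g n := by
    by_contra h'
    push_neg at h'
    exact hne (funext h')
  classical
  have hn : f (Nat.find hex) ≠ g (Nat.find hex) := Nat.find_spec hex
  have hagree : ∀ k < Nat.find hex, f k = g k := fun k hk => by
    by_contra h'
    exact Nat.find_min hex hk h'
  cases hfv : f (Nat.find hex) <;> cases hgv : g (Nat.find hex)
  · exact hn (by rw [hfv, hgv])
  · exact absurd h (ne_of_lt (gmap_lt (fun k hk => (hagree k hk).symm) hgv hfv))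
  · exact absurd h (ne_of_gt (gmap_lt hagree hfv hgv))
  · exact hn (by rw [hfv, hgv])

lemma hattori_isEmbedding {A : Set ℝ} (hdense : Dense Aᶜ) (u : ℕ → ℝ) (hu : Aᶜ = range u) :
    @IsEmbedding ℝ (ℕ → Bool) (hattori A) _
      (fun x n => (Ico (u n.unpair.1) (u n.unpair.2)).boolIndicator x) := by
  classical
  set B : ℕ → Set ℝ := fun n => Ico (u n.unpair.1) (u n.unpair.2) with hB
  set F : ℝ → ℕ → Bool := fun x n => (B n).boolIndicator x with hF
  have huA : ∀ n, u n ∉ A := fun n => by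
    have : u n ∈ Aᶜ := hu ▸ mem_range_self n
    exact this
  -- separation helper
  have hsep : ∀ x y : ℝ, x < y → ∃ n, x ∈ B n ∧ y ∉ B n := by
    intro x y hxy
    obtain ⟨r, hrA, hr⟩ := hdense.exists_between hxy
    obtain ⟨q, hqA, hq⟩ : ∃ q, q ∈ Aᶜ ∧ q ≤ x := by
      by_cases hxA : x ∈ A
      · obtain ⟨q, hqA, hq⟩ := hdense.exists_between (show x - 1 < x by linarith)
        exact ⟨q, hqA, le_of_lt hq.2⟩
      · exact ⟨x, hxA, le_refl x⟩
    rw [hu] at hqA hrA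
    obtain ⟨i, rfl⟩ := hqA
    obtain ⟨j, rfl⟩ := hrA
    refine ⟨Nat.pair i j, ?_, ?_⟩
    · simp only [hB, Nat.unpair_pair]
      exact ⟨hq, hr.1⟩
    · simp only [hB, Nat.unpair_pair, mem_Ico, not_and, not_lt]
      exact fun _ => le_of_lt hr.2
  have hinj : Function.Injective F := by
    intro x y hxy
    by_contra hne
    rcases lt_or_gt_of_ne hne with h | h
    · obtain ⟨n, h1, h2⟩ := hsep x y h
      rw [(B n).mem_iff_boolIndicator] at h1
      rw [(B n).notMem_iff_boolIndicator] at h2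
      rw [show (B n).boolIndicator x = F x n from rfl] at h1
      rw [show (B n).boolIndicator y = F y n from rfl] at h2
      rw [hxy] at h1
      rw [h1] at h2
      exact Bool.noConfusion h2
    · obtain ⟨n, h1, h2⟩ := hsep y x h
      rw [(B n).mem_iff_boolIndicator] at h1
      rw [(B n).notMem_iff_boolIndicator] at h2
      rw [show (B n).boolIndicator y = F y n from rfl] at h1
      rw [show (B n).boolIndicator x = F x n from rfl] at h2
      rw [hxy] at h2
      rw [h1] at h2
      exact Bool.noConfusion h2
  have hclopen : ∀ n, @IsClopen ℝ (hattori A) (B n) := fun n =>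
    ⟨isClosedH_Ico (huA _), isOpenH_Ico _ (huA _)⟩
  have hBopen : ∀ n, (B n) = F ⁻¹' ((fun p : ℕ → Bool => p n) ⁻¹' {true}) := by
    intro n
    ext x
    simp only [mem_preimage, mem_singleton_iff]
    exact (B n).mem_iff_boolIndicator x
  have hFcont : @Continuous ℝ (ℕ → Bool) (hattori A) _ F := by
    letI := hattori A
    refine continuous_pi (fun n => ?_)
    exact (continuous_boolIndicator_iff_isClopen (X := ℝ) (B n)).mpr (hclopen n)
  have h1 : hattori A ≤ TopologicalSpace.induced F Pi.topologicalSpace :=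
    continuous_iff_le_induced.mp hFcont
  have h2 : TopologicalSpace.induced F Pi.topologicalSpace ≤ hattori A := by
    rw [TopologicalSpace.le_def]
    intro U hU
    have hUeq : U = ⋃ n ∈ {n | B n ⊆ U}, B n := by
      ext x
      simp only [mem_iUnion, mem_setOf_eq]
      constructor
      · intro hx
        obtain ⟨q, r, hq, hr, hmem, hsub⟩ := hattori_basis hdense hU hx
        have hq' : q ∈ Aᶜ := hq
        have hr' : r ∈ Aᶜ := hr
        rw [hu] at hq' hr'
        obtain ⟨i, rfl⟩ := hq'
        obtain ⟨j, rfl⟩ := hr'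
        refine ⟨Nat.pair i j, ?_, ?_⟩
        · simpa only [hB, Nat.unpair_pair] using hsub
        · simpa only [hB, Nat.unpair_pair] using hmem
      · rintro ⟨n, hsub, hmem⟩
        exact hsub hmem
    rw [hUeq]
    apply @isOpen_biUnion ℝ ℕ (TopologicalSpace.induced F _) _ _
    intro n _
    rw [hBopen n]
    exact isOpen_induced ((continuous_apply n).isOpen_preimage _ (isOpen_discrete _))
  exact @IsEmbedding.mk ℝ (ℕ → Bool) (hattori A) _ F
    (@IsInducing.mk ℝ (ℕ → Bool) (hattori A) _ F (le_antisymm h1 h2)) hinj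

lemma hattori_embed_cantor {A : Set ℝ} (hdense : Dense Aᶜ) (hcount : (Aᶜ).Countable) :
    ∃ e : ℝ → ↥cantorSet, @IsEmbedding ℝ ↥cantorSet (hattori A) _ e := by
  obtain ⟨u, hu⟩ := hcount.exists_eq_range hdense.nonempty
  have hF := hattori_isEmbedding hdense u hu
  have hGcont : Continuous (fun p : ℕ → Bool => (⟨gmap p, gmap_mem_cantorSet p⟩ : ↥cantorSet)) :=
    gmap_continuous.subtype_mk _
  have hGinj : Function.Injective
      (fun p : ℕ → Bool => (⟨gmap p, gmap_mem_cantorSet p⟩ : ↥cantorSet)) := by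
    intro p q h
    exact gmap_injective (congrArg Subtype.val h)
  have hG := (hGcont.isClosedEmbedding hGinj).toIsEmbedding
  set G : (ℕ → Bool) → ↥cantorSet := fun p => (⟨gmap p, gmap_mem_cantorSet p⟩ : ↥cantorSet)
  set F : ℝ → ℕ → Bool := fun x n => (Ico (u n.unpair.1) (u n.unpair.2)).boolIndicator x
  obtain ⟨⟨hGeq⟩, hGinj'⟩ := hG
  obtain ⟨⟨hFeq⟩, hFinj'⟩ := hF
  have hind : hattori A = TopologicalSpace.induced (G ∘ F) inferInstance := by
    rw [← induced_compose, ← hGeq]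
    exact hFeq
  exact ⟨G ∘ F, @IsEmbedding.mk ℝ ↥cantorSet (hattori A) _ (G ∘ F)
    (@IsInducing.mk ℝ ↥cantorSet (hattori A) _ (G ∘ F) hind) (hGinj'.comp hFinj')⟩

theorem isSigmaCompact_iff_homeomorphic_Fsigma_of_cantorSet (A : Set ℝ)
    (hcount : (Aᶜ).Countable) (hdense : Dense (Aᶜ)) (Y : Set ℝ) :
    @IsSigmaCompact ℝ (hattori A) Y ↔
      ∃ S : Set ↥cantorSet,
        (∃ F : ℕ → Set ↥cantorSet, (∀ n, IsClosed (F n)) ∧ S = ⋃ n, F n) ∧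
        Nonempty (@Homeomorph ↥Y ↥S
          (TopologicalSpace.induced ((↑) : Y → ℝ) (hattori A)) inferInstance) := by
  constructor
  · intro hY
    obtain ⟨e, he⟩ := hattori_embed_cantor hdense hcount
    obtain ⟨⟨heq⟩, hinj⟩ := he
    have hembEq : TopologicalSpace.induced ((↑) : Y → ℝ) (hattori A)
        = TopologicalSpace.induced (e ∘ ((↑) : Y → ℝ)) inferInstance := by
      rw [← induced_compose, ← heq]
    have hEmb : @IsEmbedding ↥Y ↥cantorSet
        (TopologicalSpace.induced ((↑) : Y → ℝ) (hattori A)) _ (e ∘ (↑)) :=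
      @IsEmbedding.mk ↥Y ↥cantorSet
        (TopologicalSpace.induced ((↑) : Y → ℝ) (hattori A)) _ (e ∘ (↑))
        (@IsInducing.mk ↥Y ↥cantorSet
          (TopologicalSpace.induced ((↑) : Y → ℝ) (hattori A)) _ (e ∘ (↑)) hembEq)
        (hinj.comp Subtype.val_injective)
    have E := @IsEmbedding.toHomeomorph ↥Y ↥cantorSet
      (TopologicalSpace.induced ((↑) : Y → ℝ) (hattori A)) _ _ hEmb
    have hYu : @IsSigmaCompact ↥Y (TopologicalSpace.induced ((↑) : Y → ℝ) (hattori A)) univ :=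
      (@isSigmaCompact_iff_isSigmaCompact_univ ℝ (hattori A) Y).mp hY
    have hcont : @Continuous ↥Y ↥cantorSet
        (TopologicalSpace.induced ((↑) : Y → ℝ) (hattori A)) _ (e ∘ (↑)) :=
      continuous_iff_le_induced.mpr (le_of_eq hembEq)
    have hS : IsSigmaCompact ((e ∘ ((↑) : Y → ℝ)) '' univ) :=
      @IsSigmaCompact.image ↥Y ↥cantorSet
        (TopologicalSpace.induced ((↑) : Y → ℝ) (hattori A)) _ _ hcont univ hYu
    rw [image_univ] at hS
    obtain ⟨K, hKc, hKu⟩ := hS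
    exact ⟨range (e ∘ ((↑) : Y → ℝ)), ⟨K, fun n => (hKc n).isClosed, hKu.symm⟩, ⟨E⟩⟩
  · rintro ⟨S, ⟨Fs, hFcl, rfl⟩, ⟨E⟩⟩
    haveI : CompactSpace ↥cantorSet := isCompact_iff_compactSpace.mp isCompact_cantorSet
    have hS : IsSigmaCompact (⋃ n, Fs n) :=
      isSigmaCompact_iUnion_of_isCompact Fs (fun n => (hFcl n).isCompact)
    haveI hSS : SigmaCompactSpace ↥(⋃ n, Fs n) := isSigmaCompact_iff_sigmaCompactSpace.mp hS
    have hYu : @IsSigmaCompact ↥Y (TopologicalSpace.induced ((↑) : Y → ℝ) (hattori A)) univ := by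
      obtain ⟨E', hc1, hc2⟩ := E
      have h1 : IsSigmaCompact (univ : Set ↥(⋃ n, Fs n)) := isSigmaCompact_univ
      have h2 := @IsSigmaCompact.image ↥(⋃ n, Fs n) ↥Y _
        (TopologicalSpace.induced ((↑) : Y → ℝ) (hattori A)) E'.invFun hc2 univ h1
      rw [image_univ] at h2
      have hring : range E'.invFun = univ :=
        Set.range_eq_univ.mpr (fun y => ⟨E' y, E'.left_inv y⟩)
      rwa [hring] at h2
    exact (@isSigmaCompact_iff_isSigmaCompact_univ ℝ (hattori A) Y).mpr hYu
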